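/- Let r_0, …, r_{n−1} be integers with 0 ≤ r_i ≤ p−1 and set r = Σ_{i} r_i·p^i. Work in the k[Γ]-module M = ⨂_{i=0}^{n−1} (V_{p−1−r_i} ⊗_k V_{p−1})^{Fr^i}, and for ε = (ε_0,…,ε_{n−1}) ∈ {0,1}^n let b_ε = ⨂_{i=0}^{n−1} E_{(1−ε_i)(p−1−r_i)}, where E_j is formed inside V_{p−1−r_i} ⊗ V_{p−1}. Then: (i) if ε_j = 0 and r_j ≠ p−1 for some index j, then Σ_{u∈U} u·(n_s⁻¹·b_ε) = 0; (ii) if (r_0,…,r_{n−1}) ≠ (0,…,0), then Σ_{u∈U} u·(n_s⁻¹·b_𝟏) = (−1)^{1+r}·b_𝟎, where b_𝟏 = ⨂_i E_0 and b_𝟎 = ⨂_i E_{p−1−r_i}; (iii) if (r_0,…,r_{n−1}) = (0,…,0), then Σ_{u∈U} u·(n_s⁻¹·b_𝟏) = −(b_𝟎 + b_𝟏). -/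

import Mathlib

open Matrix TensorProduct

set_option linter.unusedSectionVars false

set_option synthInstance.maxHeartbeats 4000000
set_option maxHeartbeats 4000000

noncomputable section

abbrev GL2 (F : Type) [Field F] := Matrix.GeneralLinearGroup (Fin 2) F

variable (F : Type) [Field F] [Fintype F] (k : Type) [Field k]

/-- The unipotent upper-triangular matrix `[[1, c], [0, 1]]`. -/
def uElt (c : F) : GL2 F :=
  Matrix.GeneralLinearGroup.mkOfDetNeZero !![1, c; 0, 1] (by simp [Matrix.det_fin_two_of])

/-- The matrix `n_s = [[0, -1], [1, 0]]`. -/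
def nsElt : GL2 F :=
  Matrix.GeneralLinearGroup.mkOfDetNeZero !![0, -1; 1, 0] (by norm_num [Matrix.det_fin_two_of])

variable (ι : F →+* k)

/-- The linear substitution attached to `g ∈ GL₂(𝔽_q)`:
`X = X 0 ↦ ι(a) X + ι(c) Y` and `Y = X 1 ↦ ι(b) X + ι(d) Y` for `g = [[a,b],[c,d]]`. -/
def subMat (g : GL2 F) : Fin 2 → MvPolynomial (Fin 2) k := fun j =>
  ∑ i : Fin 2, MvPolynomial.C (ι ((g : Matrix (Fin 2) (Fin 2) F) i j)) * MvPolynomial.X i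

lemma subMat_one : subMat F k ι 1 = MvPolynomial.X := by
  funext j
  fin_cases j <;>
    simp [subMat, Fin.sum_univ_two, Matrix.one_apply]

lemma subMat_mul (g g' : GL2 F) (j : Fin 2) :
    MvPolynomial.aeval (R := k) (subMat F k ι g) (subMat F k ι g' j) =
      subMat F k ι (g * g') j := by
  fin_cases j <;>
    · simp [subMat, Fin.sum_univ_two, Matrix.mul_apply, Units.val_mul, _root_.map_add,
        _root_.map_mul]
      ring

/-- The representation of `Γ = GL₂(𝔽_q)` on polynomials in `X, Y` over `k`, where
`g = [[a,b],[c,d]]` acts by `X ↦ ι(a)X + ι(c)Y`, `Y ↦ ι(b)X + ι(d)Y`. -/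
def polyRep : Representation k (GL2 F) (MvPolynomial (Fin 2) k) where
  toFun g := (MvPolynomial.aeval (subMat F k ι g)).toLinearMap
  map_one' := by
    refine LinearMap.ext fun f => ?_
    simp [subMat_one, MvPolynomial.aeval_X_left]
  map_mul' g g' := by
    refine LinearMap.ext fun f => ?_
    have h : (MvPolynomial.aeval (R := k) (subMat F k ι g)).comp
        (MvPolynomial.aeval (subMat F k ι g')) =
        MvPolynomial.aeval (subMat F k ι (g * g')) := by
      rw [MvPolynomial.comp_aeval]
      congr 1
      funext j
      exact subMat_mul F k ι g g' j
    calc MvPolynomial.aeval (subMat F k ι (g * g')) f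
        = ((MvPolynomial.aeval (R := k) (subMat F k ι g)).comp
            (MvPolynomial.aeval (subMat F k ι g'))) f := by rw [h]
      _ = _ := rfl

/-- `V_d`, the space of homogeneous polynomials of degree `d` in `X, Y` over `k`. -/
abbrev Vd (d : ℕ) : Submodule k (MvPolynomial (Fin 2) k) :=
  MvPolynomial.homogeneousSubmodule (Fin 2) k d

lemma subMat_isHomogeneous (g : GL2 F) (j : Fin 2) :
    (subMat F k ι g j).IsHomogeneous 1 := by
  unfold subMat
  rw [Fin.sum_univ_two]
  exact ((MvPolynomial.isHomogeneous_X k 0).C_mul _).add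
    ((MvPolynomial.isHomogeneous_X k 1).C_mul _)

lemma polyRep_stab (g : GL2 F) (d : ℕ) :
    ∀ f ∈ Vd k d, polyRep F k ι g f ∈ Vd k d := by
  intro f hf
  rw [MvPolynomial.mem_homogeneousSubmodule] at hf ⊢
  show (MvPolynomial.aeval (subMat F k ι g) f).IsHomogeneous d
  simpa using hf.aeval (g := subMat F k ι g) (n := 1)
    (fun j => subMat_isHomogeneous F k ι g j)

/-- The representation of `Γ = GL₂(𝔽_q)` on `V_d`. -/
def VdRep (d : ℕ) : Representation k (GL2 F) (Vd k d) where
  toFun g := (polyRep F k ι g).restrict (polyRep_stab F k ι g d)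
  map_one' := by
    refine LinearMap.ext fun x => Subtype.ext ?_
    simp [LinearMap.restrict_apply]
  map_mul' g g' := by
    refine LinearMap.ext fun x => Subtype.ext ?_
    simp [LinearMap.restrict_apply]

/-- The divided-power basis vector `m_i = C(d, i) X^{d-i} Y^i` of `V_d`
(zero when `i > d`). -/
def mItem (d i : ℕ) : MvPolynomial (Fin 2) k :=
  MvPolynomial.C (d.choose i : k) * (MvPolynomial.X 0 ^ (d - i) * MvPolynomial.X 1 ^ i)

lemma mItem_mem (d i : ℕ) : mItem k d i ∈ Vd k d := by
  rw [MvPolynomial.mem_homogeneousSubmodule]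
  by_cases h : i ≤ d
  · have : (MvPolynomial.X (0 : Fin 2) ^ (d - i) * MvPolynomial.X 1 ^ i :
        MvPolynomial (Fin 2) k).IsHomogeneous d := by
      have := ((MvPolynomial.isHomogeneous_X k (0 : Fin 2)).pow (d - i)).mul
        ((MvPolynomial.isHomogeneous_X k (1 : Fin 2)).pow i)
      simpa [Nat.sub_add_cancel h] using this
    exact this.C_mul _
  · have : (d.choose i : k) = 0 := by
      rw [Nat.choose_eq_zero_of_lt (Nat.lt_of_not_le h)]
      exact Nat.cast_zero
    simp [mItem, this]
    exact MvPolynomial.isHomogeneous_zero _ _ _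

/-- `m_i` as an element of `V_d`. -/
def mElt (d i : ℕ) : Vd k d := ⟨mItem k d i, mItem_mem k d i⟩

/-- The element `E_i = ∑_{a+b=i} m_a ⊗ m_b` of `V_{d₁} ⊗ V_{d₂}` (the terms with `a > d₁`
or `b > d₂` vanish). -/
def EElt (d₁ d₂ : ℕ) (i : ℕ) : ↥(Vd k d₁) ⊗[k] ↥(Vd k d₂) :=
  ∑ a ∈ Finset.range (i + 1), mElt k d₁ a ⊗ₜ[k] mElt k d₂ (i - a)

/-- The representation of `G` on the `n`-fold tensor product `⨂ᵢ W i` built from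
representations on the factors. -/
def piRep {G : Type} [Group G] {n : ℕ} {W : Fin n → Type} [∀ i, AddCommGroup (W i)]
    [∀ i, Module k (W i)] (ρs : ∀ i, Representation k G (W i)) :
    Representation k G (⨂[k] i, W i) where
  toFun g := PiTensorProduct.map fun i => ρs i g
  map_one' := by
    show PiTensorProduct.map (fun i => ρs i 1) = 1
    have h : (fun i => ρs i 1) = fun i => (LinearMap.id : W i →ₗ[k] W i) := by
      funext i; rw [_root_.map_one]; rfl
    rw [h, PiTensorProduct.map_id]
    rfl
  map_mul' g g' := by
    show PiTensorProduct.map (fun i => ρs i (g * g')) =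
      PiTensorProduct.map (fun i => ρs i g) * PiTensorProduct.map (fun i => ρs i g')
    have h : (fun i => ρs i (g * g')) = fun i => (ρs i g) ∘ₗ (ρs i g') := by
      funext i; rw [_root_.map_mul]; rfl
    rw [h, PiTensorProduct.map_comp]
    rfl

/-- The `j`-th power of the Frobenius automorphism applied entrywise to `GL₂(𝔽_q)`. -/
def frobGL (p : ℕ) [Fact p.Prime] [CharP F p] (j : ℕ) : GL2 F →* GL2 F :=
  haveI : ExpChar F p := ExpChar.prime Fact.out
  Matrix.GeneralLinearGroup.map (iterateFrobenius F p j)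

variable (p : ℕ) [Fact p.Prime] [CharP F p] {n : ℕ}

/-- The representation of `Γ` on `M = ⨂ᵢ (V_{p-1-rᵢ} ⊗ V_{p-1})^{Fr^i}`. -/
def bigRep (r : Fin n → ℕ) :
    Representation k (GL2 F)
      (⨂[k] i : Fin n, (↥(Vd k (p - 1 - r i)) ⊗[k] ↥(Vd k (p - 1)))) :=
  piRep k (W := fun i : Fin n => ↥(Vd k (p - 1 - r i)) ⊗[k] ↥(Vd k (p - 1))) fun i =>
    (((VdRep F k ι (p - 1 - r i)).tprod (VdRep F k ι (p - 1))).comp (frobGL F p i))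

/-- The vector `b_ε = ⨂ᵢ E_{(1-εᵢ)(p-1-rᵢ)}` of `M`. -/
def bEps (r ε : Fin n → ℕ) :
    ⨂[k] i : Fin n, (↥(Vd k (p - 1 - r i)) ⊗[k] ↥(Vd k (p - 1))) :=
  PiTensorProduct.tprod k fun i => EElt k (p - 1 - r i) (p - 1) ((1 - ε i) * (p - 1 - r i))

/-- The additive group structure of `M` (Mathlib's `PiTensorProduct` instance, given its
factors explicitly because instance search no longer finds it unaided). -/
instance bigAddCommGroup (r : Fin n → ℕ) :
    AddCommGroup (⨂[k] i : Fin n, (↥(Vd k (p - 1 - r i)) ⊗[k] ↥(Vd k (p - 1)))) :=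
  PiTensorProduct.instAddCommGroup
    (s := fun i : Fin n => ↥(Vd k (p - 1 - r i)) ⊗[k] ↥(Vd k (p - 1)))


/-! ### Auxiliary lemmas -/

section Aux

set_option maxRecDepth 10000

lemma uElt_val (c : F) : ((uElt F c : GL2 F) : Matrix (Fin 2) (Fin 2) F) = !![1, c; 0, 1] := rfl

lemma nsElt_inv_val :
    (((nsElt F)⁻¹ : GL2 F) : Matrix (Fin 2) (Fin 2) F) = !![0, 1; -1, 0] := by
  have h : (nsElt F) * Matrix.GeneralLinearGroup.mkOfDetNeZero (!![0, 1; -1, 0] : Matrix (Fin 2) (Fin 2) F)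
      (by norm_num [Matrix.det_fin_two_of]) = 1 := by
    apply Units.ext
    show (!![0,-1;1,0] : Matrix (Fin 2) (Fin 2) F) * !![0,1;-1,0] = 1
    rw [Matrix.mul_fin_two, Matrix.one_fin_two]
    norm_num
  rw [inv_eq_of_mul_eq_one_right h]
  rfl

lemma subMat_uElt (t : F) :
    subMat F k ι (uElt F t) 0 = MvPolynomial.X 0 ∧
    subMat F k ι (uElt F t) 1 = MvPolynomial.C (ι t) * MvPolynomial.X 0 + MvPolynomial.X 1 := by
  constructor <;>
  · simp [subMat, Fin.sum_univ_two, uElt_val, Matrix.cons_val_zero, Matrix.cons_val_one]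

lemma subMat_nsInv :
    subMat F k ι ((nsElt F)⁻¹) 0 = - MvPolynomial.X 1 ∧
    subMat F k ι ((nsElt F)⁻¹) 1 = MvPolynomial.X 0 := by
  constructor <;>
  · simp only [subMat, Fin.sum_univ_two, nsElt_inv_val]
    simp [Matrix.cons_val_zero, Matrix.cons_val_one]

lemma polyRep_apply (g : GL2 F) (f : MvPolynomial (Fin 2) k) :
    polyRep F k ι g f = MvPolynomial.aeval (subMat F k ι g) f := rfl

lemma polyRep_ns_mItem (d i : ℕ) (hi : i ≤ d) :
    polyRep F k ι ((nsElt F)⁻¹) (mItem k d i)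
      = MvPolynomial.C ((-1 : k) ^ (d - i)) * mItem k d (d - i) := by
  rw [polyRep_apply, mItem, mItem]
  rw [Nat.choose_symm hi, Nat.sub_sub_self hi]
  rw [_root_.map_mul, _root_.map_mul, _root_.map_pow, _root_.map_pow, MvPolynomial.aeval_C,
    MvPolynomial.aeval_X, MvPolynomial.aeval_X, (subMat_nsInv F k ι).1, (subMat_nsInv F k ι).2,
    MvPolynomial.algebraMap_eq, _root_.map_pow, map_neg, _root_.map_one,
    show (-(MvPolynomial.X 1) : MvPolynomial (Fin 2) k) = (-1) * MvPolynomial.X 1 from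
      (neg_one_mul _).symm, mul_pow]
  ring


lemma polyRep_u_mItem (t : F) (d i : ℕ) (hi : i ≤ d) :
    polyRep F k ι (uElt F t) (mItem k d i)
      = ∑ j ∈ Finset.range (i + 1),
          MvPolynomial.C (((d - j).choose (i - j) : k) * ι t ^ (i - j)) * mItem k d j := by
  rw [← Finset.sum_range_reflect]
  rw [polyRep_apply, mItem]
  rw [_root_.map_mul, _root_.map_mul, _root_.map_pow, _root_.map_pow, MvPolynomial.aeval_C,
    MvPolynomial.aeval_X, MvPolynomial.aeval_X, (subMat_uElt F k ι t).1, (subMat_uElt F k ι t).2,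
    MvPolynomial.algebraMap_eq, add_pow, Finset.mul_sum, Finset.mul_sum]
  refine Finset.sum_congr rfl fun m hm => ?_
  rw [Finset.mem_range] at hm
  have hm' : m ≤ i := by omega
  have h1 : i + 1 - 1 - m = i - m := by omega
  have h2 : i - (i - m) = m := by omega
  have h3 : d - (i - m) = d - i + m := by omega
  rw [h1, mItem, h2, h3]
  have hnat : (d.choose i) * (i.choose m) = d.choose (i - m) * ((d - i + m).choose m) := by
    rw [← Nat.choose_symm hm', Nat.choose_mul (n := d) (Nat.sub_le i m), Nat.sub_sub_self hm', ← h3]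
  have hkP : (MvPolynomial.C (d.choose i : k) * MvPolynomial.C (i.choose m : k)
        : MvPolynomial (Fin 2) k)
      = MvPolynomial.C (d.choose (i - m) : k) * MvPolynomial.C (((d - i + m).choose m : k)) := by
    rw [← MvPolynomial.C_mul, ← MvPolynomial.C_mul]
    congr 1
    exact_mod_cast congrArg (Nat.cast : ℕ → k) hnat
  rw [mul_pow, ← MvPolynomial.C_eq_coe_nat, ← _root_.map_pow (MvPolynomial.C (σ := Fin 2)) (ι t) m,
    _root_.map_mul, pow_add]
  linear_combination (MvPolynomial.X (0:Fin 2) ^ (d-i) * MvPolynomial.X (0:Fin 2) ^ m *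
    MvPolynomial.X (1:Fin 2) ^ (i-m) * MvPolynomial.C (ι t ^ m)) * hkP

lemma mElt_zero (d i : ℕ) (h : d < i) : mElt k d i = 0 := by
  apply Subtype.ext
  show mItem k d i = 0
  rw [mItem, Nat.choose_eq_zero_of_lt h]
  simp

lemma VdRep_coe (g : GL2 F) (d : ℕ) (x : Vd k d) :
    ((VdRep F k ι d g x : Vd k d) : MvPolynomial (Fin 2) k) = polyRep F k ι g (x : _) := rfl

lemma VdRep_ns_mElt (d i : ℕ) (hi : i ≤ d) :
    VdRep F k ι d ((nsElt F)⁻¹) (mElt k d i) = ((-1 : k) ^ (d - i)) • mElt k d (d - i) := by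
  apply Subtype.ext
  rw [VdRep_coe]
  show polyRep F k ι ((nsElt F)⁻¹) (mItem k d i) = ((-1 : k) ^ (d - i)) • mItem k d (d - i)
  rw [polyRep_ns_mItem F k ι d i hi, MvPolynomial.C_mul']

lemma mElt_coe (d i : ℕ) : ((mElt k d i : Vd k d) : MvPolynomial (Fin 2) k) = mItem k d i := rfl

lemma VdRep_u_mElt (d i : ℕ) (t : F) (hi : i ≤ d) :
    VdRep F k ι d (uElt F t) (mElt k d i)
      = ∑ j ∈ Finset.range (d + 1),
          (if j ≤ i then ((d - j).choose (i - j) : k) * ι t ^ (i - j) else 0) • mElt k d j := by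
  have hL : VdRep F k ι d (uElt F t) (mElt k d i)
      = ∑ j ∈ Finset.range (i + 1), (((d - j).choose (i - j) : k) * ι t ^ (i - j)) • mElt k d j := by
    apply Subtype.ext
    rw [VdRep_coe]
    show polyRep F k ι (uElt F t) (mItem k d i) = _
    rw [polyRep_u_mItem F k ι t d i hi]
    push_cast [Submodule.coe_sum, SetLike.val_smul, mElt_coe]
    exact Finset.sum_congr rfl fun j hj => MvPolynomial.C_mul'
  rw [hL]
  rw [← Finset.sum_subset (Finset.range_subset_range.2 (by omega : i + 1 ≤ d + 1))
    (fun x _ hx => by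
      rw [Finset.mem_range, not_lt] at hx
      rw [if_neg (by omega), zero_smul])]
  exact Finset.sum_congr rfl fun j hj => by
    rw [Finset.mem_range] at hj
    rw [if_pos (by omega)]


/-- Normal form: a "boxed" linear combination of `m_a ⊗ m_b`. -/
def bForm (d1 d2 : ℕ) (c : ℕ → ℕ → k) : ↥(Vd k d1) ⊗[k] ↥(Vd k d2) :=
  ∑ a ∈ Finset.range (d1 + 1), ∑ b ∈ Finset.range (d2 + 1),
    c a b • (mElt k d1 a ⊗ₜ[k] mElt k d2 b)

lemma bForm_congr {d1 d2 : ℕ} {c c' : ℕ → ℕ → k}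
    (h : ∀ a ≤ d1, ∀ b ≤ d2, c a b = c' a b) : bForm k d1 d2 c = bForm k d1 d2 c' :=
  Finset.sum_congr rfl fun a ha => Finset.sum_congr rfl fun b hb => by
    rw [Finset.mem_range] at ha hb
    rw [h a (by omega) b (by omega)]

lemma smul_bForm (d1 d2 : ℕ) (s : k) (c : ℕ → ℕ → k) :
    s • bForm k d1 d2 c = bForm k d1 d2 (fun a b => s * c a b) := by
  rw [bForm, bForm, Finset.smul_sum]
  refine Finset.sum_congr rfl fun a _ => ?_
  rw [Finset.smul_sum]
  exact Finset.sum_congr rfl fun b _ => (smul_smul s _ _)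

lemma bForm_sum (d1 d2 : ℕ) (s : Finset ℕ) (cf : ℕ → ℕ → ℕ → k) :
    ∑ m ∈ s, bForm k d1 d2 (cf m) = bForm k d1 d2 (fun a b => ∑ m ∈ s, cf m a b) := by
  simp only [bForm]
  rw [Finset.sum_comm]
  refine Finset.sum_congr rfl fun a _ => ?_
  rw [Finset.sum_comm]
  refine Finset.sum_congr rfl fun b _ => ?_
  rw [Finset.sum_smul]

lemma EElt_eq_bForm (d1 d2 j : ℕ) :
    EElt k d1 d2 j = bForm k d1 d2 (fun a b => if a + b = j then 1 else 0) := by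
  have hinner : ∀ a, (∑ b ∈ Finset.range (d2 + 1),
      (if a + b = j then (1:k) else 0) • (mElt k d1 a ⊗ₜ[k] mElt k d2 b))
      = if a ≤ j ∧ j - a ≤ d2 then mElt k d1 a ⊗ₜ[k] mElt k d2 (j - a) else 0 := by
    intro a
    by_cases h : a ≤ j ∧ j - a ≤ d2
    · rw [if_pos h, Finset.sum_eq_single (j - a)]
      · rw [if_pos (by omega), one_smul]
      · intro b _ hne
        rw [if_neg (by omega), zero_smul]
      · intro hmem
        exact absurd (Finset.mem_range.mpr (by omega)) hmem
    · rw [if_neg h]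
      refine Finset.sum_eq_zero fun b hb => ?_
      rw [Finset.mem_range] at hb
      rw [if_neg (by omega), zero_smul]
  rw [bForm]
  simp only [hinner]
  rw [EElt]
  have hL : ∀ a ∈ Finset.range (j + 1),
      mElt k d1 a ⊗ₜ[k] mElt k d2 (j - a)
        = if a ≤ j ∧ j - a ≤ d2 then mElt k d1 a ⊗ₜ[k] mElt k d2 (j - a) else 0 := by
    intro a ha
    rw [Finset.mem_range] at ha
    by_cases h2 : j - a ≤ d2
    · rw [if_pos ⟨by omega, h2⟩]
    · rw [if_neg (by tauto), mElt_zero k d2 (j - a) (by omega), TensorProduct.tmul_zero]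
  rw [Finset.sum_congr rfl hL]
  rw [Finset.sum_subset (Finset.range_subset_range.2 (by omega : j + 1 ≤ j + d1 + 2))
    (fun a _ ha => by rw [Finset.mem_range, not_lt] at ha; rw [if_neg (by omega)]),
    ← Finset.sum_subset (Finset.range_subset_range.2 (by omega : d1 + 1 ≤ j + d1 + 2))
    (fun a _ ha => by
      rw [Finset.mem_range, not_lt] at ha
      by_cases h2 : a ≤ j ∧ j - a ≤ d2
      · rw [if_pos h2, mElt_zero k d1 a (by omega), TensorProduct.zero_tmul]
      · rw [if_neg h2])]

lemma ns_bForm (d1 d2 : ℕ) (c : ℕ → ℕ → k) :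
    TensorProduct.map (VdRep F k ι d1 ((nsElt F)⁻¹)) (VdRep F k ι d2 ((nsElt F)⁻¹))
        (bForm k d1 d2 c)
      = bForm k d1 d2 (fun a b => (-1 : k) ^ (a + b) * c (d1 - a) (d2 - b)) := by
  rw [bForm, bForm, map_sum, ← Finset.sum_range_reflect]
  refine Finset.sum_congr rfl fun a ha => ?_
  rw [Finset.mem_range] at ha
  rw [map_sum, ← Finset.sum_range_reflect]
  refine Finset.sum_congr rfl fun b hb => ?_
  rw [Finset.mem_range] at hb
  simp only [Nat.add_sub_cancel]
  rw [LinearMap.map_smul, TensorProduct.map_tmul,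
    VdRep_ns_mElt F k ι d1 (d1 - a) (Nat.sub_le _ _),
    VdRep_ns_mElt F k ι d2 (d2 - b) (Nat.sub_le _ _),
    Nat.sub_sub_self (by omega : a ≤ d1), Nat.sub_sub_self (by omega : b ≤ d2)]
  simp only [TensorProduct.smul_tmul', TensorProduct.tmul_smul, smul_smul]
  congr 1
  ring

lemma sum4_swap {M : Type} [AddCommMonoid M] (s1 s2 s3 s4 : Finset ℕ) (f : ℕ → ℕ → ℕ → ℕ → M) :
    (∑ a ∈ s1, ∑ b ∈ s2, ∑ x ∈ s3, ∑ y ∈ s4, f a b x y)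
      = ∑ x ∈ s3, ∑ y ∈ s4, ∑ a ∈ s1, ∑ b ∈ s2, f a b x y := by
  have h1 : (∑ a ∈ s1, ∑ b ∈ s2, ∑ x ∈ s3, ∑ y ∈ s4, f a b x y)
      = ∑ a ∈ s1, ∑ x ∈ s3, ∑ y ∈ s4, ∑ b ∈ s2, f a b x y := by
    refine Finset.sum_congr rfl fun a _ => ?_
    rw [Finset.sum_comm]
    exact Finset.sum_congr rfl fun x _ => Finset.sum_comm
  rw [h1, Finset.sum_comm]
  refine Finset.sum_congr rfl fun x _ => ?_
  rw [Finset.sum_comm]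

lemma u_bForm (d1 d2 : ℕ) (t : F) (c : ℕ → ℕ → k) :
    TensorProduct.map (VdRep F k ι d1 (uElt F t)) (VdRep F k ι d2 (uElt F t))
        (bForm k d1 d2 c)
      = bForm k d1 d2 (fun a' b' =>
          ∑ a ∈ Finset.range (d1 + 1), ∑ b ∈ Finset.range (d2 + 1),
            c a b * ((if a' ≤ a then ((d1 - a').choose (a - a') : k) * ι t ^ (a - a') else 0)
              * (if b' ≤ b then ((d2 - b').choose (b - b') : k) * ι t ^ (b - b') else 0))) := by
  rw [bForm]
  have step : ∀ a ∈ Finset.range (d1 + 1), ∀ b ∈ Finset.range (d2 + 1),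
      TensorProduct.map (VdRep F k ι d1 (uElt F t)) (VdRep F k ι d2 (uElt F t))
        (c a b • (mElt k d1 a ⊗ₜ[k] mElt k d2 b))
      = ∑ a' ∈ Finset.range (d1 + 1), ∑ b' ∈ Finset.range (d2 + 1),
          (c a b * ((if a' ≤ a then ((d1 - a').choose (a - a') : k) * ι t ^ (a - a') else 0)
            * (if b' ≤ b then ((d2 - b').choose (b - b') : k) * ι t ^ (b - b') else 0)))
          • (mElt k d1 a' ⊗ₜ[k] mElt k d2 b') := by
    intro a ha b hb
    rw [Finset.mem_range] at ha hb
    rw [LinearMap.map_smul, TensorProduct.map_tmul,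
      VdRep_u_mElt F k ι d1 a t (by omega), VdRep_u_mElt F k ι d2 b t (by omega),
      TensorProduct.sum_tmul, Finset.smul_sum]
    refine Finset.sum_congr rfl fun a' _ => ?_
    rw [TensorProduct.tmul_sum, Finset.smul_sum]
    refine Finset.sum_congr rfl fun b' _ => ?_
    simp only [TensorProduct.smul_tmul', TensorProduct.tmul_smul, smul_smul]
    congr 1
    ring
  rw [map_sum]
  calc (∑ a ∈ Finset.range (d1 + 1), TensorProduct.map _ _
          (∑ b ∈ Finset.range (d2 + 1), c a b • (mElt k d1 a ⊗ₜ[k] mElt k d2 b)))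
      = ∑ a ∈ Finset.range (d1 + 1), ∑ b ∈ Finset.range (d2 + 1),
          ∑ a' ∈ Finset.range (d1 + 1), ∑ b' ∈ Finset.range (d2 + 1),
          (c a b * ((if a' ≤ a then ((d1 - a').choose (a - a') : k) * ι t ^ (a - a') else 0)
            * (if b' ≤ b then ((d2 - b').choose (b - b') : k) * ι t ^ (b - b') else 0)))
          • (mElt k d1 a' ⊗ₜ[k] mElt k d2 b') := by
        refine Finset.sum_congr rfl fun a ha => ?_
        rw [map_sum]
        exact Finset.sum_congr rfl fun b hb => step a ha b hb
    _ = _ := by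
        rw [sum4_swap]
        rw [bForm]
        refine Finset.sum_congr rfl fun a' _ => Finset.sum_congr rfl fun b' _ => ?_
        rw [Finset.sum_smul]
        refine Finset.sum_congr rfl fun a _ => ?_
        rw [Finset.sum_smul]


lemma nat_vandermonde (n1 n2 K : ℕ) :
    (∑ u ∈ Finset.range (n1 + 1),
        if u ≤ K ∧ K - u ≤ n2 then n1.choose u * n2.choose (K - u) else 0)
      = (n1 + n2).choose K := by
  rw [Nat.add_choose_eq, Finset.Nat.sum_antidiagonal_eq_sum_range_succ_mk]
  have h1 : (∑ u ∈ Finset.range (K + 1), n1.choose u * n2.choose (K - u))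
      = ∑ u ∈ Finset.range (K + 1),
          if u ≤ K ∧ K - u ≤ n2 then n1.choose u * n2.choose (K - u) else 0 := by
    refine Finset.sum_congr rfl fun u hu => ?_
    rw [Finset.mem_range] at hu
    by_cases h2 : K - u ≤ n2
    · rw [if_pos ⟨by omega, h2⟩]
    · rw [if_neg (by tauto), Nat.choose_eq_zero_of_lt (show n2 < K - u from by omega), Nat.mul_zero]
  rw [h1]
  rw [Finset.sum_subset (Finset.range_subset_range.2 (by omega : n1 + 1 ≤ n1 + K + 2))
    (fun u _ hu => by
      rw [Finset.mem_range, not_lt] at hu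
      by_cases h2 : u ≤ K ∧ K - u ≤ n2
      · rw [if_pos h2, Nat.choose_eq_zero_of_lt (by omega), Nat.zero_mul]
      · rw [if_neg h2]),
    ← Finset.sum_subset (Finset.range_subset_range.2 (by omega : K + 1 ≤ n1 + K + 2))
    (fun u _ hu => by
      rw [Finset.mem_range, not_lt] at hu
      rw [if_neg (by omega)])]

lemma nat_double (d1 d2 j a' b' : ℕ) (ha' : a' ≤ d1) (hb' : b' ≤ d2) (hj : a' + b' ≤ j) :
    (∑ a ∈ Finset.range (d1 + 1), ∑ b ∈ Finset.range (d2 + 1),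
      if a + b = j ∧ a' ≤ a ∧ b' ≤ b
        then (d1 - a').choose (a - a') * (d2 - b').choose (b - b') else 0)
      = (d1 + d2 - (a' + b')).choose (j - (a' + b')) := by
  have hinner : ∀ a, (∑ b ∈ Finset.range (d2 + 1),
      if a + b = j ∧ a' ≤ a ∧ b' ≤ b
        then (d1 - a').choose (a - a') * (d2 - b').choose (b - b') else 0)
      = if a' ≤ a ∧ a ≤ j ∧ b' ≤ j - a ∧ j - a ≤ d2
          then (d1 - a').choose (a - a') * (d2 - b').choose (j - a - b') else 0 := by
    intro a
    by_cases h : a' ≤ a ∧ a ≤ j ∧ b' ≤ j - a ∧ j - a ≤ d2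
    · rw [if_pos h, Finset.sum_eq_single (j - a)]
      · rw [if_pos ⟨by omega, h.1, h.2.2.1⟩]
      · intro b _ hne; rw [if_neg (by omega)]
      · intro hmem; exact absurd (Finset.mem_range.mpr (by omega)) hmem
    · rw [if_neg h]
      refine Finset.sum_eq_zero fun b hb => ?_
      rw [Finset.mem_range] at hb
      rw [if_neg (by omega)]
  simp only [hinner]
  rw [Finset.range_eq_Ico,
    ← Finset.sum_subset (Finset.Ico_subset_Ico (Nat.zero_le a') le_rfl)
      (fun x hx0 hx => by
        rw [Finset.mem_Ico] at hx0 hx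
        rw [if_neg (by omega)]),
    Finset.sum_Ico_eq_sum_range]
  rw [show d1 + 1 - a' = (d1 - a') + 1 from by omega]
  rw [show d1 + d2 - (a' + b') = (d1 - a') + (d2 - b') from by omega]
  rw [← nat_vandermonde (d1 - a') (d2 - b') (j - (a' + b'))]
  refine Finset.sum_congr rfl fun u hu => ?_
  rw [Finset.mem_range] at hu
  by_cases hc : u ≤ j - (a' + b') ∧ j - (a' + b') - u ≤ d2 - b'
  · rw [if_pos (by omega), if_pos hc]
    congr 2 <;> omega
  · rw [if_neg (by omega), if_neg hc]

lemma key_sum (d1 d2 j a' b' : ℕ) (t : F) (ha' : a' ≤ d1) (hb' : b' ≤ d2) :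
    (∑ a ∈ Finset.range (d1 + 1), ∑ b ∈ Finset.range (d2 + 1),
      (if a + b = j then (1:k) else 0) *
        ((if a' ≤ a then ((d1 - a').choose (a - a') : k) * ι t ^ (a - a') else 0)
          * (if b' ≤ b then ((d2 - b').choose (b - b') : k) * ι t ^ (b - b') else 0)))
      = if a' + b' ≤ j then ((d1 + d2 - (a' + b')).choose (j - (a' + b')) : k)
          * ι t ^ (j - (a' + b')) else 0 := by
  by_cases hj : a' + b' ≤ j
  case neg =>
    rw [if_neg hj]
    refine Finset.sum_eq_zero fun a _ => Finset.sum_eq_zero fun b _ => ?_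
    by_cases h1 : a + b = j
    · by_cases h2 : a' ≤ a
      · rw [if_neg (show ¬ b' ≤ b by omega)]; ring
      · rw [if_neg h2]; ring
    · rw [if_neg h1]; ring
  case pos =>
    rw [if_pos hj]
    have hterm : ∀ a ∈ Finset.range (d1+1), ∀ b ∈ Finset.range (d2+1),
        (if a + b = j then (1:k) else 0) *
        ((if a' ≤ a then ((d1 - a').choose (a - a') : k) * ι t ^ (a - a') else 0)
          * (if b' ≤ b then ((d2 - b').choose (b - b') : k) * ι t ^ (b - b') else 0))
        = ι t ^ (j - (a' + b')) * (((if a + b = j ∧ a' ≤ a ∧ b' ≤ b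
            then (d1 - a').choose (a - a') * (d2 - b').choose (b - b') else 0) : ℕ) : k) := by
      intro a _ b _
      by_cases h1 : a + b = j ∧ a' ≤ a ∧ b' ≤ b
      · rw [if_pos h1.1, if_pos h1.2.1, if_pos h1.2.2, if_pos h1]
        push_cast
        rw [show j - (a' + b') = (a - a') + (b - b') from by omega, pow_add]
        ring
      · rw [if_neg h1, Nat.cast_zero, mul_zero]
        by_cases hc1 : a + b = j
        · by_cases hc2 : a' ≤ a
          · rw [if_neg (show ¬ b' ≤ b from fun hb => h1 ⟨hc1, hc2, hb⟩)]; ring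
          · rw [if_neg hc2]; ring
        · rw [if_neg hc1]; ring
    rw [Finset.sum_congr rfl fun a ha =>
      Finset.sum_congr rfl fun b hb => hterm a ha b hb]
    simp only [← Finset.mul_sum, ← Nat.cast_sum]
    rw [nat_double d1 d2 j a' b' ha' hb' hj]
    ring

lemma ns_EElt (d1 d2 j : ℕ) (hj : j ≤ d1 + d2) :
    TensorProduct.map (VdRep F k ι d1 ((nsElt F)⁻¹)) (VdRep F k ι d2 ((nsElt F)⁻¹))
        (EElt k d1 d2 j)
      = ((-1 : k) ^ (d1 + d2 - j)) • EElt k d1 d2 (d1 + d2 - j) := by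
  rw [EElt_eq_bForm, ns_bForm, EElt_eq_bForm, smul_bForm]
  refine bForm_congr k fun a ha b hb => ?_
  by_cases h : a + b = d1 + d2 - j
  · rw [if_pos (show (d1 - a) + (d2 - b) = j from by omega), if_pos h, mul_one, mul_one, h]
  · rw [if_neg (show ¬((d1 - a) + (d2 - b) = j) from by omega), if_neg h, mul_zero, mul_zero]

lemma u_EElt (d1 d2 j : ℕ) (t : F) :
    TensorProduct.map (VdRep F k ι d1 (uElt F t)) (VdRep F k ι d2 (uElt F t)) (EElt k d1 d2 j)
      = ∑ m ∈ Finset.range (j + 1),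
          (((d1 + d2 - m).choose (j - m) : k) * ι t ^ (j - m)) • EElt k d1 d2 m := by
  rw [EElt_eq_bForm, u_bForm]
  have hR : ∀ m, (((d1 + d2 - m).choose (j - m) : k) * ι t ^ (j - m)) • EElt k d1 d2 m
      = bForm k d1 d2 (fun a b =>
          if a + b = m then ((d1 + d2 - m).choose (j - m) : k) * ι t ^ (j - m) else 0) := by
    intro m
    rw [EElt_eq_bForm, smul_bForm]
    refine bForm_congr k fun a _ b _ => ?_
    by_cases h : a + b = m
    · rw [if_pos h, if_pos h, mul_one]
    · rw [if_neg h, if_neg h, mul_zero]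
  simp only [hR]
  rw [bForm_sum]
  refine bForm_congr k fun a ha b hb => ?_
  rw [key_sum F k ι d1 d2 j a b t ha hb]
  rw [Finset.sum_ite_eq]
  simp only [Finset.mem_range, Nat.lt_succ_iff]


section Frob

lemma frobGL_coe (j : ℕ) (g : GL2 F) :
    ((frobGL F p j g : GL2 F) : Matrix (Fin 2) (Fin 2) F)
      = (g : Matrix (Fin 2) (Fin 2) F).map (fun x => x ^ p ^ j) := by
  haveI : ExpChar F p := ExpChar.prime Fact.out
  show (Units.map (RingHom.mapMatrix (iterateFrobenius F p j)).toMonoidHom g).val = _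
  rw [Units.coe_map]
  ext a b
  simp [RingHom.mapMatrix_apply, Matrix.map_apply, iterateFrobenius_def]

lemma frobGL_uElt (j : ℕ) (t : F) : frobGL F p j (uElt F t) = uElt F (t ^ p ^ j) := by
  have hpj : p ^ j ≠ 0 := pow_ne_zero _ (Nat.Prime.ne_zero Fact.out)
  apply Units.ext
  rw [frobGL_coe, uElt_val, uElt_val]
  ext a b
  fin_cases a <;> fin_cases b <;>
    simp [Matrix.map_apply, one_pow, zero_pow hpj]

lemma frobGL_nsInv (j : ℕ) : frobGL F p j ((nsElt F)⁻¹) = (nsElt F)⁻¹ := by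
  have hpj : p ^ j ≠ 0 := pow_ne_zero _ (Nat.Prime.ne_zero Fact.out)
  rw [map_inv]
  congr 1
  apply Units.ext
  rw [frobGL_coe]
  show ((!![0,-1;1,0] : Matrix (Fin 2) (Fin 2) F)).map _ = !![0,-1;1,0]
  ext a b
  fin_cases a <;> fin_cases b <;>
    simp [Matrix.map_apply, one_pow, zero_pow hpj, neg_one_pow_char_pow]

lemma piRep_tprod {G : Type} [Group G] {W : Fin n → Type} [∀ i, AddCommGroup (W i)]
    [∀ i, Module k (W i)] (ρs : ∀ i, Representation k G (W i)) (g : G) (f : ∀ i, W i) :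
    piRep k ρs g (PiTensorProduct.tprod k f)
      = PiTensorProduct.tprod k fun i => ρs i g (f i) := by
  show PiTensorProduct.map (fun i => ρs i g) (PiTensorProduct.tprod k f) = _
  exact PiTensorProduct.map_tprod _ _

lemma bigRep_tprod (r : Fin n → ℕ) (g : GL2 F)
    (f : ∀ i : Fin n, ↥(Vd k (p - 1 - r i)) ⊗[k] ↥(Vd k (p - 1))) :
    bigRep F k ι p r g (PiTensorProduct.tprod k f)
      = PiTensorProduct.tprod k fun i =>
          TensorProduct.map (VdRep F k ι (p - 1 - r i) (frobGL F p i g))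
            (VdRep F k ι (p - 1) (frobGL F p i g)) (f i) := by
  rw [bigRep, piRep_tprod]
  rfl

end Frob

section CharSum

lemma sum_pow_field (N : ℕ) :
    (∑ t : F, t ^ N) = if N ≠ 0 ∧ (Fintype.card F - 1) ∣ N then -1 else 0 := by
  classical
  have hu : (∑ x : Fˣ, ((x : F)) ^ N) = if (Fintype.card F - 1) ∣ N then -1 else 0 := by
    have := FiniteField.sum_pow_units F N
    simpa [Units.val_pow_eq_pow_val] using this
  have hsplit : (∑ t : F, t ^ N) = (0:F) ^ N + ∑ x : Fˣ, ((x : F)) ^ N := by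
    rw [← Finset.add_sum_erase Finset.univ _ (Finset.mem_univ (0:F))]
    congr 1
    refine (Finset.sum_nbij' (i := fun (x : Fˣ) => (x : F))
      (j := fun t => if h : t = (0:F) then 1 else Units.mk0 t h) ?_ ?_ ?_ ?_ ?_).symm
    · intro a _
      exact Finset.mem_erase.mpr ⟨Units.ne_zero a, Finset.mem_univ _⟩
    · intro a _
      exact Finset.mem_univ _
    · intro a _
      simp [Units.ne_zero a]
    · intro a ha
      rw [Finset.mem_erase] at ha
      simp [ha.1]
    · intro a _
      rfl
  rw [hsplit, hu]
  by_cases hN : N = 0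
  · subst hN
    rw [pow_zero, if_pos (dvd_zero _), if_neg (fun h => h.1 rfl)]
    ring
  · rw [zero_pow hN, zero_add]
    by_cases hdvd : (Fintype.card F - 1) ∣ N
    · rw [if_pos hdvd, if_pos ⟨hN, hdvd⟩]
    · rw [if_neg hdvd, if_neg (fun h2 => hdvd h2.2)]

lemma char_sum (N : ℕ) :
    (∑ t : F, ι t ^ N) = if N ≠ 0 ∧ (Fintype.card F - 1) ∣ N then (-1 : k) else 0 := by
  have h1 : (∑ t : F, ι t ^ N) = ι (∑ t : F, t ^ N) := by
    rw [map_sum]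
    exact Finset.sum_congr rfl fun t _ => (map_pow ι t N).symm
  rw [h1, sum_pow_field]
  by_cases h : N ≠ 0 ∧ (Fintype.card F - 1) ∣ N
  · rw [if_pos h, if_pos h, _root_.map_neg, _root_.map_one]
  · rw [if_neg h, if_neg h, _root_.map_zero]

end CharSum

section Digits

lemma dvd_window {p x : ℕ} (hp : 2 ≤ p) (hd : p ∣ x) (h1 : 1 ≤ x) (h2 : x ≤ 2*p) :
    x = p ∨ x = 2*p := by
  obtain ⟨c, rfl⟩ := hd
  have hc1 : 1 ≤ c := by nlinarith
  have hc2 : c ≤ 2 := by nlinarith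
  interval_cases c
  · left; ring
  · right; ring

lemma digits_lemma {p : ℕ} (hp2 : 2 ≤ p) : ∀ (N : ℕ) (e : ℕ → ℕ),
    (∀ i, i < N → e i ≤ 2*p - 2) →
    ((∑ i ∈ Finset.range N, e i * p ^ i = p ^ N - 1 → ∀ i, i < N → e i = p - 1) ∧
     (∑ i ∈ Finset.range N, e i * p ^ i = 2*(p ^ N - 1) → ∀ i, i < N → e i = 2*p - 2) ∧
     (∑ i ∈ Finset.range N, e i * p ^ i ≠ 2*p ^ N - 1)) := by
  intro N
  induction N with
  | zero =>
    intro e he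
    exact ⟨by intro _ i hi; omega, by intro _ i hi; omega, by simp⟩
  | succ N ih =>
    intro e he
    have hQ : 1 ≤ p ^ N := Nat.one_le_pow _ _ (by omega)
    have hsum : ∑ i ∈ Finset.range (N+1), e i * p ^ i
        = e 0 + p * ∑ i ∈ Finset.range N, e (i+1) * p ^ i := by
      calc ∑ i ∈ Finset.range (N+1), e i * p ^ i
          = (∑ i ∈ Finset.range N, e (i+1) * p ^ (i+1)) + e 0 * p ^ 0 :=
            Finset.sum_range_succ' _ _
        _ = e 0 + p * ∑ i ∈ Finset.range N, e (i+1) * p ^ i := by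
            rw [pow_zero, mul_one, add_comm]
            congr 1
            rw [Finset.mul_sum]
            refine Finset.sum_congr rfl fun i _ => ?_
            rw [pow_succ]; ring
    set S := ∑ i ∈ Finset.range N, e (i+1) * p ^ i with hS
    obtain ⟨ih1, ih2, ih3⟩ := ih (fun i => e (i+1)) (fun i hi => he (i+1) (by omega))
    have he0 := he 0 (by omega)
    have hpow : p ^ (N+1) = p ^ N * p := pow_succ p N
    have hc : p * p ^ N = p ^ N * p := Nat.mul_comm _ _
    have hc2 : p * (2 * p ^ N) = 2 * (p ^ N * p) := by ring
    have hQp : 0 < p ^ N * p := Nat.mul_pos (by omega) (by omega)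
    refine ⟨?_, ?_, ?_⟩
    · intro hs i hi
      rw [hsum, hpow] at hs
      have h1 : e 0 + 1 + p * S = p ^ N * p := by omega
      have hd : p ∣ e 0 + 1 := ⟨p ^ N - S, by rw [Nat.mul_sub]; omega⟩
      have hw := dvd_window hp2 hd (by omega) (by omega)
      have he0p : e 0 = p - 1 := by omega
      have hSval : S = p ^ N - 1 := by
        have h3 : p * (S + 1) = p * p ^ N := by rw [Nat.mul_add]; omega
        have h4 := Nat.eq_of_mul_eq_mul_left (by omega : 0 < p) h3
        omega
      rcases Nat.eq_zero_or_pos i with hi0 | hipos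
      · subst hi0; exact he0p
      · obtain ⟨i', rfl⟩ : ∃ i', i = i' + 1 := ⟨i - 1, by omega⟩
        exact ih1 hSval i' (by omega)
    · intro hs i hi
      rw [hsum, hpow] at hs
      have h1 : e 0 + 2 + p * S = 2 * (p ^ N * p) := by omega
      have hd : p ∣ e 0 + 2 := ⟨2 * p ^ N - S, by rw [Nat.mul_sub]; omega⟩
      have hw := dvd_window hp2 hd (by omega) (by omega)
      rcases hw with hw | hw
      · exfalso
        apply ih3
        have h3 : p * (S + 1) = p * (2 * p ^ N) := by rw [Nat.mul_add]; omega
        have h4 := Nat.eq_of_mul_eq_mul_left (by omega : 0 < p) h3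
        omega
      · have he0p : e 0 = 2*p - 2 := by omega
        have hSval : S = 2*(p ^ N - 1) := by
          have h3 : p * (S + 2) = p * (2 * p ^ N) := by rw [Nat.mul_add]; omega
          have h4 := Nat.eq_of_mul_eq_mul_left (by omega : 0 < p) h3
          omega
        rcases Nat.eq_zero_or_pos i with hi0 | hipos
        · subst hi0; exact he0p
        · obtain ⟨i', rfl⟩ : ∃ i', i = i' + 1 := ⟨i - 1, by omega⟩
          exact ih2 hSval i' (by omega)
    · intro hs
      rw [hsum, hpow] at hs
      have h1 : e 0 + 1 + p * S = 2 * (p ^ N * p) := by omega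
      have hd : p ∣ e 0 + 1 := ⟨2 * p ^ N - S, by rw [Nat.mul_sub]; omega⟩
      have hw := dvd_window hp2 hd (by omega) (by omega)
      apply ih3
      have h3 : p * (S + 1) = p * (2 * p ^ N) := by rw [Nat.mul_add]; omega
      have h4 := Nat.eq_of_mul_eq_mul_left (by omega : 0 < p) h3
      omega

lemma geom_bound {p : ℕ} (hp2 : 2 ≤ p) (N : ℕ) (e : ℕ → ℕ) (he : ∀ i, i < N → e i ≤ 2*p - 2) :
    ∑ i ∈ Finset.range N, e i * p ^ i ≤ 2 * (p ^ N - 1) := by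
  induction N with
  | zero => simp
  | succ N ih =>
    rw [Finset.sum_range_succ]
    have h1 := ih (fun i hi => he i (by omega))
    have h2 : e N * p ^ N ≤ (2*p - 2) * p ^ N :=
      Nat.mul_le_mul_right _ (he N (by omega))
    have hQ : 1 ≤ p ^ N := Nat.one_le_pow _ _ (by omega)
    have hQ1 : 1 ≤ p ^ (N+1) := Nat.one_le_pow _ _ (by omega)
    have hpz : ((p:ℤ))^(N+1) = (p:ℤ)^N * (p:ℤ) := pow_succ _ _
    zify [hQ, hQ1, (show 2 ≤ 2*p by omega)] at h1 h2 ⊢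
    nlinarith [h1, h2, hpz]

lemma geom_exact {p : ℕ} (hp2 : 2 ≤ p) (a N : ℕ) :
    ∑ i ∈ Finset.range N, (a * (p-1)) * p ^ i = a * (p ^ N - 1) := by
  induction N with
  | zero => simp
  | succ N ih =>
    rw [Finset.sum_range_succ, ih]
    have hQ : 1 ≤ p ^ N := Nat.one_le_pow _ _ (by omega)
    have hQ1 : 1 ≤ p ^ (N+1) := Nat.one_le_pow _ _ (by omega)
    have hpz : ((p:ℤ))^(N+1) = (p:ℤ)^N * (p:ℤ) := pow_succ _ _
    zify [hQ, hQ1, (show 1 ≤ p from by omega)]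
    linear_combination (-(a:ℤ)) * hpz

end Digits

end Aux

/-- the value of `∑_{u ∈ U} u • (n_s⁻¹ • b_ε)` in
`M = ⨂ᵢ (V_{p-1-rᵢ} ⊗ V_{p-1})^{Fr^i}`:
(i) it vanishes if `ε_j = 0` and `r_j ≠ p-1` for some `j`;
(ii) it equals `(-1)^{1+r} • b₀` on `b_𝟏` if `r ≠ 0`;
(iii) it equals `-(b₀ + b₁)` on `b_𝟏` if `r = 0`. -/
theorem stmt_14 (hn : 1 ≤ n) (hF : Fintype.card F = p ^ n)
    [IsAlgClosed k] [CharP k p]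
    (r : Fin n → ℕ) (hr : ∀ i, r i ≤ p - 1) :
    -- (i)
    (∀ ε : Fin n → ℕ, (∀ i, ε i ≤ 1) → (∃ j, ε j = 0 ∧ r j ≠ p - 1) →
      ∑ c : F, bigRep F k ι p r (uElt F c)
        (bigRep F k ι p r ((nsElt F)⁻¹) (bEps k p r ε)) = 0) ∧
    -- (ii)  (here `b_𝟏 = bEps k p r 1` and `b_𝟎 = bEps k p r 0`)
    ((∃ j, r j ≠ 0) →
      ∑ c : F, bigRep F k ι p r (uElt F c)
          (bigRep F k ι p r ((nsElt F)⁻¹) (bEps k p r 1)) =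
        ((-1 : k) ^ (1 + ∑ i : Fin n, r i * p ^ (i : ℕ))) • bEps k p r 0) ∧
    -- (iii)
    ((∀ i, r i = 0) →
      ∑ c : F, bigRep F k ι p r (uElt F c)
          (bigRep F k ι p r ((nsElt F)⁻¹) (bEps k p r 1)) =
        -(bEps k p r 0 + bEps k p r 1)) := by
  classical
  have hp2 : 2 ≤ p := (Fact.out : p.Prime).two_le
  have hq2 : 2 ≤ p ^ n := le_trans hp2 (Nat.le_self_pow (by omega) p)
  set D : Fin n → ℕ := fun i => (p - 1 - r i) + (p - 1) with hDdef
  have hD : ∀ i, D i ≤ 2*p - 2 := fun i => by simp only [hDdef]; omega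
  -- conversion between `Fin`-sums and `range`-sums
  have hconv : ∀ (e : Fin n → ℕ), (∑ i : Fin n, p ^ (i:ℕ) * e i)
      = ∑ j ∈ Finset.range n, (if h : j < n then e ⟨j, h⟩ else 0) * p ^ j := by
    intro e
    rw [← Fin.sum_univ_eq_sum_range (fun j => (if h : j < n then e ⟨j, h⟩ else 0) * p ^ j) n]
    refine Finset.sum_congr rfl fun i _ => ?_
    rw [dif_pos i.isLt, Fin.eta]
    ring
  -- the master formula
  have main : ∀ (J : Fin n → ℕ), (∀ i, J i ≤ D i) →
      (∑ c : F, bigRep F k ι p r (uElt F c)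
        (bigRep F k ι p r ((nsElt F)⁻¹)
          (PiTensorProduct.tprod k fun i => EElt k (p - 1 - r i) (p - 1) (J i))))
      = (∏ i : Fin n, (-1:k) ^ (D i - J i)) •
          ∑ γ ∈ Fintype.piFinset (fun i : Fin n => Finset.range (D i - J i + 1)),
            ((∏ i : Fin n, ((D i - γ i).choose (D i - J i - γ i) : k)) *
              (if (∑ i : Fin n, p ^ (i:ℕ) * (D i - J i - γ i)) ≠ 0 ∧
                  (p ^ n - 1) ∣ (∑ i : Fin n, p ^ (i:ℕ) * (D i - J i - γ i)) then (-1:k) else 0)) •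
            PiTensorProduct.tprod k (fun i => EElt k (p - 1 - r i) (p - 1) (γ i)) := by
    intro J hJ
    have hns : bigRep F k ι p r ((nsElt F)⁻¹)
        (PiTensorProduct.tprod k fun i => EElt k (p - 1 - r i) (p - 1) (J i))
        = (∏ i : Fin n, (-1:k) ^ (D i - J i)) •
            PiTensorProduct.tprod k (fun i => EElt k (p - 1 - r i) (p - 1) (D i - J i)) := by
      rw [bigRep_tprod]
      have h1 : ∀ i : Fin n,
          TensorProduct.map (VdRep F k ι (p-1-r i) (frobGL F p i ((nsElt F)⁻¹)))
            (VdRep F k ι (p-1) (frobGL F p i ((nsElt F)⁻¹)))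
            (EElt k (p-1-r i) (p-1) (J i))
          = ((-1:k) ^ (D i - J i)) • EElt k (p-1-r i) (p-1) (D i - J i) := by
        intro i
        rw [frobGL_nsInv, ns_EElt F k ι _ _ _ (hJ i)]
      simp only [h1]
      exact MultilinearMap.map_smul_univ _ _ _
    have hstep : ∀ c : F, bigRep F k ι p r (uElt F c)
        (bigRep F k ι p r ((nsElt F)⁻¹)
          (PiTensorProduct.tprod k fun i => EElt k (p - 1 - r i) (p - 1) (J i)))
      = (∏ i : Fin n, (-1:k) ^ (D i - J i)) •
          ∑ γ ∈ Fintype.piFinset (fun i : Fin n => Finset.range (D i - J i + 1)),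
            (∏ i : Fin n, (((p - 1 - r i + (p-1) - γ i).choose (D i - J i - γ i) : k)
                * (ι c) ^ (p ^ (i:ℕ) * (D i - J i - γ i)))) •
            PiTensorProduct.tprod k (fun i => EElt k (p - 1 - r i) (p - 1) (γ i)) := by
      intro c
      rw [hns, LinearMap.map_smul, bigRep_tprod]
      congr 1
      have h2 : ∀ i : Fin n,
          TensorProduct.map (VdRep F k ι (p-1-r i) (frobGL F p i (uElt F c)))
            (VdRep F k ι (p-1) (frobGL F p i (uElt F c)))
            (EElt k (p-1-r i) (p-1) (D i - J i))
          = ∑ m ∈ Finset.range (D i - J i + 1),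
              (((p - 1 - r i + (p-1) - m).choose (D i - J i - m) : k)
                * (ι c) ^ (p ^ (i:ℕ) * (D i - J i - m))) • EElt k (p-1-r i) (p-1) m := by
        intro i
        rw [frobGL_uElt, u_EElt]
        refine Finset.sum_congr rfl fun m hm => ?_
        congr 2
        rw [map_pow, ← pow_mul]
      simp only [h2]
      rw [MultilinearMap.map_sum_finset]
      exact Finset.sum_congr rfl fun γ _ => MultilinearMap.map_smul_univ _ _ _
    rw [Finset.sum_congr rfl fun c _ => hstep c]
    rw [← Finset.smul_sum]
    congr 1
    rw [Finset.sum_comm]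
    refine Finset.sum_congr rfl fun γ _ => ?_
    rw [← Finset.sum_smul]
    congr 1
    have h3 : ∀ c : F, (∏ i : Fin n, (((p - 1 - r i + (p-1) - γ i).choose (D i - J i - γ i) : k)
            * (ι c) ^ (p ^ (i:ℕ) * (D i - J i - γ i))))
        = (∏ i : Fin n, ((D i - γ i).choose (D i - J i - γ i) : k))
            * (ι c) ^ (∑ i : Fin n, p ^ (i:ℕ) * (D i - J i - γ i)) := by
      intro c
      rw [Finset.prod_mul_distrib, Finset.prod_pow_eq_pow_sum]
    rw [Finset.sum_congr rfl fun c _ => h3 c, ← Finset.mul_sum]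
    congr 1
    rw [char_sum F k ι, hF]
  -- constrained values of the exponent sum
  have hNcases : ∀ (e : Fin n → ℕ), (∀ i, e i ≤ 2*p - 2) →
      ((∑ i : Fin n, p ^ (i:ℕ) * e i) ≠ 0) →
      ((p ^ n - 1) ∣ (∑ i : Fin n, p ^ (i:ℕ) * e i)) →
      ((∀ i, e i = p - 1) ∨ ((∀ i, e i = 2*p - 2) ∧
        (∑ i : Fin n, p ^ (i:ℕ) * e i) = 2*(p^n - 1))) := by
    intro e he hne hdvd
    have hre := hconv e
    have hbd : (∑ i : Fin n, p ^ (i:ℕ) * e i) ≤ 2*(p^n - 1) := by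
      rw [hre]
      refine geom_bound hp2 n _ (fun j hj => ?_)
      rw [dif_pos hj]
      exact he _
    obtain ⟨m, hm⟩ := hdvd
    have hm1 : 1 ≤ m := by
      rcases Nat.eq_zero_or_pos m with h | h
      · subst h; rw [Nat.mul_zero] at hm; exact absurd hm hne
      · exact h
    have h2' : (p^n - 1) * m ≤ (p^n - 1) * 2 := by
      have : (p^n - 1) * 2 = 2 * (p^n - 1) := Nat.mul_comm _ _
      omega
    have hm2 := Nat.le_of_mul_le_mul_left h2' (by omega)
    have hebd : ∀ j, j < n → (if h : j < n then e ⟨j, h⟩ else 0) ≤ 2*p - 2 := by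
      intro j hj; rw [dif_pos hj]; exact he _
    interval_cases m
    · left
      intro i
      have hdig := (digits_lemma hp2 n _ hebd).1 (by rw [← hre]; omega) i.val i.isLt
      rw [dif_pos i.isLt, Fin.eta] at hdig
      exact hdig
    · right
      constructor
      · intro i
        have hdig := (digits_lemma hp2 n _ hebd).2.1 (by rw [← hre]; omega) i.val i.isLt
        rw [dif_pos i.isLt, Fin.eta] at hdig
        exact hdig
      · omega
  have hpar : ∀ (f g : Fin n → ℕ), (∀ i, f i % 2 = g i % 2) →
      ((∑ i, f i) % 2 = (∑ i, g i) % 2) := by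
    intro f g h
    rw [Finset.sum_nat_mod, Finset.sum_congr rfl (fun i _ => h i), ← Finset.sum_nat_mod]
  -- sign helper
  have hneg1 : ∀ (m m' : ℕ), (p = 2 ∨ m % 2 = m' % 2) → ((-1:k)^m = (-1:k)^m') := by
    intro m m' h
    rcases h with h | h
    · have h2 : (2 : k) = 0 := by
        subst h; exact CharP.cast_eq_zero k 2
      have hne : (-1 : k) = 1 := by linear_combination -h2
      rw [hne, one_pow, one_pow]
    · rw [neg_one_pow_eq_pow_mod_two, h, ← neg_one_pow_eq_pow_mod_two]
  refine ⟨?_, ?_, ?_⟩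
  · -- part (i)
    intro ε hε hex
    obtain ⟨j, hj0, hjr⟩ := hex
    set J : Fin n → ℕ := fun i => (1 - ε i) * (p - 1 - r i) with hJdef
    have hJle : ∀ i, J i ≤ D i := by
      intro i
      rcases Nat.le_one_iff_eq_zero_or_eq_one.mp (hε i) with h | h <;>
        simp only [hJdef, hDdef, h] <;> omega
    have hbe : bEps k p r ε
        = PiTensorProduct.tprod k fun i => EElt k (p - 1 - r i) (p - 1) (J i) := rfl
    rw [hbe, main J hJle]
    rw [Finset.sum_eq_zero, smul_zero]
    intro γ hγ
    rw [Fintype.mem_piFinset] at hγ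
    have hγle : ∀ i, γ i ≤ D i - J i := fun i => by
      have := hγ i; rw [Finset.mem_range] at this; omega
    by_cases hN : (∑ i : Fin n, p ^ (i:ℕ) * (D i - J i - γ i)) ≠ 0 ∧
        (p ^ n - 1) ∣ (∑ i : Fin n, p ^ (i:ℕ) * (D i - J i - γ i))
    · have hecases := hNcases (fun i => D i - J i - γ i)
        (fun i => by show D i - J i - γ i ≤ 2*p - 2; have := hD i; omega) hN.1 hN.2
      have hJj : J j = p - 1 - r j := by simp only [hJdef, hj0]; omega
      have hDJj : D j - J j = p - 1 := by
        rw [hJj]; simp only [hDdef]; have := hr j; omega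
      rcases hecases with hcase | ⟨hcase, _⟩
      · have hej : D j - J j - γ j = p - 1 := hcase j
        have hγj : γ j = 0 := by
          have := hγle j; omega
        rw [if_pos hN]
        have hfac : ((D j - γ j).choose (D j - J j - γ j) : k) = 0 := by
          rw [hγj, Nat.sub_zero, Nat.sub_zero, hDJj]
          have hdvd : p ∣ (D j).choose (p - 1) := by
            have h1 : D j = (p - 1) + (p - 1 - r j) := by simp only [hDdef]; omega
            rw [h1]
            have := hr j
            exact Nat.Prime.dvd_choose_add Fact.out (by omega) (by omega) (by omega)
          exact (CharP.cast_eq_zero_iff k p _).mpr hdvd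
        rw [Finset.prod_eq_zero (Finset.mem_univ j) hfac, zero_mul, zero_smul]
      · exfalso
        have hej : D j - J j - γ j = 2*p - 2 := hcase j
        have := hγle j
        have := hD j
        omega
    · rw [if_neg hN, mul_zero, zero_smul]
  · -- part (ii)
    intro hex
    obtain ⟨j, hrj⟩ := hex
    have hbe : bEps k p r 1
        = PiTensorProduct.tprod k fun i => EElt k (p - 1 - r i) (p - 1) ((fun _ : Fin n => 0) i) := by
      unfold bEps
      congr 1
      funext i
      norm_num
    rw [hbe, main (fun _ => 0) (fun i => Nat.zero_le _)]
    simp only [Nat.sub_zero]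
    set γ₀ : Fin n → ℕ := fun i => p - 1 - r i with hγ₀def
    have hγ₀mem : γ₀ ∈ Fintype.piFinset (fun i : Fin n => Finset.range (D i + 1)) := by
      rw [Fintype.mem_piFinset]
      intro i
      rw [Finset.mem_range]
      simp only [hγ₀def, hDdef]
      omega
    have hN₀ : (∑ i : Fin n, p ^ (i:ℕ) * (D i - γ₀ i)) = p ^ n - 1 := by
      have h1 : ∀ i : Fin n, D i - γ₀ i = p - 1 := by
        intro i; simp only [hγ₀def, hDdef]; have := hr i; omega
      rw [Finset.sum_congr rfl fun i _ => by rw [h1 i]]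
      rw [hconv (fun _ => p - 1)]
      rw [show (∑ j ∈ Finset.range n, (if h : j < n then (p-1) else 0) * p ^ j)
          = ∑ j ∈ Finset.range n, (1 * (p-1)) * p ^ j from
        Finset.sum_congr rfl fun j hj => by
          rw [Finset.mem_range] at hj; rw [dif_pos hj, one_mul]]
      rw [geom_exact hp2 1 n, one_mul]
    rw [Finset.sum_eq_single_of_mem γ₀ hγ₀mem (by
      intro γ hγ hne
      rw [Fintype.mem_piFinset] at hγ
      have hγle : ∀ i, γ i ≤ D i := fun i => by
        have := hγ i; rw [Finset.mem_range] at this; omega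
      by_cases hN : (∑ i : Fin n, p ^ (i:ℕ) * (D i - γ i)) ≠ 0 ∧
          (p ^ n - 1) ∣ (∑ i : Fin n, p ^ (i:ℕ) * (D i - γ i))
      · have hecases := hNcases (fun i => D i - γ i)
          (fun i => by show D i - γ i ≤ 2*p-2; have := hD i; omega) hN.1 hN.2
        rcases hecases with hcase | ⟨hcase, _⟩
        · exfalso
          apply hne
          funext i
          have h1 : D i - γ i = p - 1 := hcase i
          have h2 := hγle i
          have h3 := hr i
          simp only [hγ₀def, hDdef] at *
          omega
        · exfalso
          have h1 : D j - γ j = 2*p - 2 := hcase j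
          have h2 := hγle j
          have h3 := hr j
          simp only [hDdef] at *
          omega
      · rw [if_neg hN, mul_zero, zero_smul])]
    have hch : (∏ i : Fin n, ((D i - γ₀ i).choose (D i - γ₀ i) : k)) = 1 := by
      refine Finset.prod_eq_one fun i _ => ?_
      rw [Nat.choose_self, Nat.cast_one]
    rw [hch, one_mul, hN₀, if_pos ⟨by omega, dvd_refl _⟩]
    have hb0 : bEps k p r 0
        = PiTensorProduct.tprod k (fun i => EElt k (p-1-r i) (p-1) (γ₀ i)) := by
      unfold bEps
      congr 1
      funext i
      congr 1
      simp [hγ₀def]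
    rw [hb0, smul_smul]
    congr 1
    rw [Finset.prod_pow_eq_pow_sum, ← pow_succ]
    apply hneg1
    by_cases hp' : p = 2
    · exact Or.inl hp'
    · right
      have hpodd : p % 2 = 1 := Nat.odd_iff.mp (Nat.Prime.odd_of_ne_two Fact.out hp')
      have h1 : (∑ i, D i) % 2 = (∑ i : Fin n, r i * p^(i:ℕ)) % 2 := by
        apply hpar
        intro i
        have hpi : p ^ (i:ℕ) % 2 = 1 := Nat.odd_iff.mp (Odd.pow (Nat.odd_iff.mpr hpodd))
        have hri := hr i
        have hmm := Nat.mul_mod (r i) (p^(i:ℕ)) 2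
        rw [hpi, mul_one, Nat.mod_mod_of_dvd _ dvd_rfl] at hmm
        rw [hmm]
        simp only [hDdef]
        omega
      omega
  · -- part (iii)
    intro h0
    have hbe : bEps k p r 1
        = PiTensorProduct.tprod k fun i => EElt k (p - 1 - r i) (p - 1) ((fun _ : Fin n => 0) i) := by
      unfold bEps
      congr 1
      funext i
      norm_num
    conv_lhs => rw [hbe, main (fun _ => 0) (fun i => Nat.zero_le _)]
    simp only [Nat.sub_zero]
    set γ₀ : Fin n → ℕ := fun _ => p - 1 with hγ₀def
    set γ₁ : Fin n → ℕ := fun _ => 0 with hγ₁def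
    have hD0 : ∀ i, D i = 2*p - 2 := fun i => by simp only [hDdef, h0 i]; omega
    have hne01 : γ₀ ≠ γ₁ := by
      intro h
      have := congrFun h ⟨0, by omega⟩
      simp only [hγ₀def, hγ₁def] at this
      omega
    have hsub : ({γ₀, γ₁} : Finset (Fin n → ℕ))
        ⊆ Fintype.piFinset (fun i : Fin n => Finset.range (D i + 1)) := by
      intro x hx
      rw [Finset.mem_insert, Finset.mem_singleton] at hx
      rw [Fintype.mem_piFinset]
      intro i
      rw [Finset.mem_range]
      have := hD0 i
      rcases hx with h | h <;> subst h <;> simp only [hγ₀def, hγ₁def] <;> omega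
    rw [← Finset.sum_subset hsub (by
      intro γ hγ hnotin
      rw [Finset.mem_insert, Finset.mem_singleton] at hnotin
      push_neg at hnotin
      rw [Fintype.mem_piFinset] at hγ
      have hγle : ∀ i, γ i ≤ D i := fun i => by
        have := hγ i; rw [Finset.mem_range] at this; omega
      by_cases hN : (∑ i : Fin n, p ^ (i:ℕ) * (D i - γ i)) ≠ 0 ∧
          (p ^ n - 1) ∣ (∑ i : Fin n, p ^ (i:ℕ) * (D i - γ i))
      · have hecases := hNcases (fun i => D i - γ i)
          (fun i => by show D i - γ i ≤ 2*p-2; have := hD i; omega) hN.1 hN.2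
        rcases hecases with hcase | ⟨hcase, _⟩
        · exfalso
          apply hnotin.1
          funext i
          have h1 : D i - γ i = p - 1 := hcase i
          have h2 := hγle i
          have h3 := hD0 i
          simp only [hγ₀def]
          omega
        · exfalso
          apply hnotin.2
          funext i
          have h1 : D i - γ i = 2*p - 2 := hcase i
          have h2 := hγle i
          have h3 := hD0 i
          simp only [hγ₁def]
          omega
      · rw [if_neg hN, mul_zero, zero_smul])]
    rw [Finset.sum_pair hne01]
    have hch : ∀ γ : Fin n → ℕ, (∏ i : Fin n, ((D i - γ i).choose (D i - γ i) : k)) = 1 :=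
      fun γ => Finset.prod_eq_one fun i _ => by rw [Nat.choose_self, Nat.cast_one]
    have hN₀ : (∑ i : Fin n, p ^ (i:ℕ) * (D i - γ₀ i)) = p ^ n - 1 := by
      have h1 : ∀ i : Fin n, D i - γ₀ i = p - 1 := by
        intro i; have := hD0 i; simp only [hγ₀def]; omega
      rw [Finset.sum_congr rfl fun i _ => by rw [h1 i]]
      rw [hconv (fun _ => p - 1)]
      rw [show (∑ j ∈ Finset.range n, (if h : j < n then (p-1) else 0) * p ^ j)
          = ∑ j ∈ Finset.range n, (1 * (p-1)) * p ^ j from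
        Finset.sum_congr rfl fun j hj => by
          rw [Finset.mem_range] at hj; rw [dif_pos hj, one_mul]]
      rw [geom_exact hp2 1 n, one_mul]
    have hN₁ : (∑ i : Fin n, p ^ (i:ℕ) * (D i - γ₁ i)) = 2*(p ^ n - 1) := by
      have h1 : ∀ i : Fin n, D i - γ₁ i = 2*(p - 1) := by
        intro i; have := hD0 i; simp only [hγ₁def]; omega
      rw [Finset.sum_congr rfl fun i _ => by rw [h1 i]]
      rw [hconv (fun _ => 2*(p - 1))]
      rw [show (∑ j ∈ Finset.range n, (if h : j < n then 2*(p-1) else 0) * p ^ j)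
          = ∑ j ∈ Finset.range n, (2 * (p-1)) * p ^ j from
        Finset.sum_congr rfl fun j hj => by
          rw [Finset.mem_range] at hj; rw [dif_pos hj]]
      rw [geom_exact hp2 2 n]
    rw [hch γ₀, hch γ₁, one_mul, one_mul, hN₀, hN₁,
      if_pos ⟨by omega, dvd_refl _⟩, if_pos ⟨by omega, dvd_mul_left _ _⟩]
    have hb0 : bEps k p r 0
        = PiTensorProduct.tprod k (fun i => EElt k (p-1-r i) (p-1) (γ₀ i)) := by
      unfold bEps
      congr 1
      funext i
      congr 1
      simp only [hγ₀def, h0 i]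
      norm_num
    have hb1 : bEps k p r 1
        = PiTensorProduct.tprod k (fun i => EElt k (p-1-r i) (p-1) (γ₁ i)) := by
      unfold bEps
      congr 1
      funext i
      congr 1
      simp only [hγ₁def]
      norm_num
    rw [hb0, hb1]
    have hsign : (∏ i : Fin n, (-1:k) ^ (D i)) = 1 := by
      have hm : (∑ i, D i) % 2 = 0 % 2 := by
        rw [hpar (fun i => D i) (fun _ => 0)
          (fun i => by show D i % 2 = 0 % 2; rw [hD0 i]; omega)]
        simp
      rw [Finset.prod_pow_eq_pow_sum, hneg1 _ 0 (Or.inr hm), pow_zero]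
    rw [hsign, one_smul]
    module

end
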